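/- Let ω ∈ ℝⁿ satisfy |⟨k,ω⟩| ≥ |k|^{−τ} for all nonzero k ∈ ℤⁿ, with τ ≥ n−1. Then for K ≥ 1, Ω := max_{0<|k|≤K} |⟨k,ω⟩|^{−1} ≤ K^τ, and hence the small-divisor solution operator L on trigonometric polynomials of order K with zero mean satisfies K‖Lf‖_s ≤ 2^{n+1} e^{sK} K^{τ+1} ⫴f⫴_s. -/

import Mathlib

open scoped BigOperators

noncomputable section

/-- ℓ¹-norm of an integer vector. -/
def l1 {n : ℕ} (k : Fin n → ℤ) : ℝ := ∑ i, |(k i : ℝ)|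

/-- sinh x / x, extended by 1 at x = 0. -/
def sr (x : ℝ) : ℝ := if x = 0 then 1 else Real.sinh x / x

/-- The weight w_k(t) = ∏ i, sinh (t k i) / (t k i). -/
def wt {n : ℕ} (t : ℝ) (k : Fin n → ℤ) : ℝ := ∏ i, sr (t * (k i : ℝ))

/-- Wiener (analytic) norm of a Fourier coefficient family. -/
def wiener {n : ℕ} (c : (Fin n → ℤ) → ℂ) (s : ℝ) : ℝ :=
  ∑' k, ‖c k‖ * Real.exp (s * l1 k)

/-- Strip-averaged L² norm of a Fourier coefficient family. -/
def stripL2 {n : ℕ} (c : (Fin n → ℤ) → ℂ) (s : ℝ) : ℝ :=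
  Real.sqrt (∑' k, ‖c k‖ ^ 2 * wt (2 * s) k)

section Aux

lemma l1_natCast {n : ℕ} (k : Fin n → ℤ) : l1 k = ((∑ i, (k i).natAbs : ℕ) : ℝ) := by
  unfold l1; push_cast [Nat.cast_natAbs]; rfl

lemma l1_nonneg {n : ℕ} (k : Fin n → ℤ) : 0 ≤ l1 k :=
  Finset.sum_nonneg fun i _ => abs_nonneg _

lemma one_le_l1 {n : ℕ} {k : Fin n → ℤ} (hk : k ≠ 0) : 1 ≤ l1 k := by
  rw [l1_natCast]
  have : (∑ i, (k i).natAbs) ≠ 0 := by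
    simp only [ne_eq, Finset.sum_eq_zero_iff, Finset.mem_univ, true_implies, Int.natAbs_eq_zero]
    intro h; exact hk (funext h)
  exact_mod_cast Nat.one_le_iff_ne_zero.2 this

lemma l1_pos_iff {n : ℕ} {k : Fin n → ℤ} : 0 < l1 k ↔ k ≠ 0 := by
  constructor
  · intro h hk; subst hk; simp [l1] at h
  · intro h; linarith [one_le_l1 h]

lemma one_le_sr (x : ℝ) : 1 ≤ sr x := by
  have key : ∀ y : ℝ, 0 < y → 1 ≤ Real.sinh y / y := by
    intro y hy
    rw [le_div_iff₀ hy, one_mul]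
    exact Real.self_le_sinh_iff.2 hy.le
  unfold sr
  rcases lt_trichotomy x 0 with h | h | h
  · rw [if_neg h.ne]
    have : Real.sinh x / x = Real.sinh (-x) / (-x) := by
      rw [Real.sinh_neg]; ring
    rw [this]; exact key _ (by linarith)
  · simp [h]
  · rw [if_neg h.ne']; exact key _ h

lemma one_le_wt {n : ℕ} (t : ℝ) (k : Fin n → ℤ) : 1 ≤ wt t k := by
  unfold wt
  calc (1 : ℝ) = ∏ _i : Fin n, (1 : ℝ) := by simp
    _ ≤ ∏ i, sr (t * (k i : ℝ)) :=
        Finset.prod_le_prod (by intro i _; norm_num) (fun i _ => one_le_sr _)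

end Aux

section Packing

open MeasureTheory Pointwise
open scoped ENNReal

lemma packing {n : ℕ} (K : ℕ) (hK : 1 ≤ K) (S : Finset (Fin n → ℤ))
    (hS : ∀ k ∈ S, l1 k ≤ K)
    (hsep : ∀ k ∈ S, ∀ k' ∈ S, k ≠ k' → (K : ℝ) < l1 (k - k')) :
    S.card ≤ 3 ^ n := by
  classical
  set r : ℝ := (K : ℝ) / 2 with hr
  have hrpos : 0 < r := by positivity
  set T1 : Set (Fin n → ℝ) := {y | ∑ i, |y i| < 1} with hT1
  have hsmul : ∀ a : ℝ, 0 < a → {y : Fin n → ℝ | ∑ i, |y i| < a} = a • T1 := by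
    intro a ha
    ext y
    rw [Set.mem_smul_set_iff_inv_smul_mem₀ ha.ne']
    simp only [Set.mem_setOf_eq, hT1, Pi.smul_apply, smul_eq_mul, abs_mul,
      abs_of_nonneg (inv_nonneg.2 ha.le), ← Finset.mul_sum]
    rw [inv_mul_lt_iff₀ ha, mul_one]
  have hvol : ∀ a : ℝ, 0 < a →
      volume {y : Fin n → ℝ | ∑ i, |y i| < a}
        = ENNReal.ofReal (a ^ n) * volume T1 := by
    intro a ha
    rw [hsmul a ha, Measure.addHaar_smul_of_nonneg volume ha.le T1]
    congr 2
    simp [Module.finrank_pi]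
  have hcont : ∀ c : Fin n → ℝ, Continuous fun y : Fin n → ℝ => ∑ i, |y i - c i| := by
    intro c
    exact continuous_finset_sum _ fun i _ => ((continuous_apply i).sub continuous_const).abs
  have hT1open : IsOpen T1 := by
    have := isOpen_lt (by simpa using hcont 0) (continuous_const (y := (1:ℝ)))
    simpa [hT1] using this
  have hT1ne : T1.Nonempty := ⟨0, by simp [hT1]⟩
  have hv0 : volume T1 ≠ 0 := (hT1open.measure_pos volume hT1ne).ne'
  have hvt : volume T1 ≠ ⊤ := by
    have hsub : T1 ⊆ Set.pi Set.univ fun _ : Fin n => Set.Icc (-1 : ℝ) 1 := by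
      intro y hy
      intro i _
      have h1 : |y i| ≤ ∑ j, |y j| :=
        Finset.single_le_sum (fun j _ => abs_nonneg (y j)) (Finset.mem_univ i)
      have := (h1.trans_lt hy).le
      exact abs_le.1 this
    refine ne_top_of_le_ne_top ?_ (measure_mono hsub)
    rw [volume_pi_pi]
    refine (ENNReal.prod_lt_top fun i _ => ?_).ne
    simp [Real.volume_Icc]
  set U : (Fin n → ℤ) → Set (Fin n → ℝ) := fun k => {y | ∑ i, |y i - (k i : ℝ)| < r} with hU
  have hUopen : ∀ k, IsOpen (U k) := fun k => isOpen_lt (hcont _) continuous_const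
  have hUvol : ∀ k, volume (U k) = ENNReal.ofReal (r ^ n) * volume T1 := by
    intro k
    have : U k = (fun y : Fin n → ℝ => (fun i => -(k i : ℝ)) + y) ⁻¹' {y | ∑ i, |y i| < r} := by
      ext y; simp [hU, Pi.add_apply, neg_add_eq_sub, Set.mem_setOf_eq]
    rw [this, measure_preimage_add, hvol r hrpos]
  have hdisj : (S : Set (Fin n → ℤ)).PairwiseDisjoint U := by
    intro k hk k' hk' hne
    refine Set.disjoint_left.2 fun y hy hy' => ?_
    have h1 : l1 (k - k') ≤ ∑ i, (|y i - (k i : ℝ)| + |y i - (k' i : ℝ)|) := by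
      unfold l1
      refine Finset.sum_le_sum fun i _ => ?_
      have : ((k - k') i : ℝ) = (y i - (k' i : ℝ)) - (y i - (k i : ℝ)) := by
        simp only [Pi.sub_apply, Int.cast_sub]; ring
      rw [this]
      exact (abs_sub _ _).trans (by rw [add_comm])
    rw [Finset.sum_add_distrib] at h1
    have h2 := hsep k hk k' hk' hne
    have : (K : ℝ) < r + r := lt_of_lt_of_le (h2.trans_le h1) (by
      exact add_le_add (le_of_lt hy) (le_of_lt hy'))
    rw [hr] at this
    linarith
  have hsubBig : ∀ k ∈ S, U k ⊆ {y : Fin n → ℝ | ∑ i, |y i| < 3 * r} := by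
    intro k hk y hy
    simp only [Set.mem_setOf_eq] at hy ⊢
    have h1 : ∑ i, |y i| ≤ ∑ i, (|y i - (k i : ℝ)| + |(k i : ℝ)|) := by
      refine Finset.sum_le_sum fun i _ => ?_
      calc |y i| = |(y i - (k i : ℝ)) + (k i : ℝ)| := by rw [sub_add_cancel]
        _ ≤ _ := abs_add_le _ _
    rw [Finset.sum_add_distrib] at h1
    have h2 : l1 k ≤ (K : ℝ) := hS k hk
    unfold l1 at h2
    have : (K : ℝ) = 2 * r := by rw [hr]; ring
    calc ∑ i, |y i| ≤ (∑ i, |y i - (k i : ℝ)|) + ∑ i, |(k i : ℝ)| := h1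
      _ < r + 2 * r := by rw [← this]; exact add_lt_add_of_lt_of_le hy h2
      _ = 3 * r := by ring
  have hle : (S.card : ℝ≥0∞) * (ENNReal.ofReal (r ^ n) * volume T1)
      ≤ ENNReal.ofReal ((3 * r) ^ n) * volume T1 := by
    calc (S.card : ℝ≥0∞) * (ENNReal.ofReal (r ^ n) * volume T1)
        = ∑ k ∈ S, volume (U k) := by
          rw [Finset.sum_congr rfl fun k _ => hUvol k, Finset.sum_const, nsmul_eq_mul]
      _ = volume (⋃ k ∈ S, U k) :=
          (measure_biUnion_finset hdisj fun k _ => (hUopen k).measurableSet).symm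
      _ ≤ volume {y : Fin n → ℝ | ∑ i, |y i| < 3 * r} :=
          measure_mono (Set.iUnion₂_subset hsubBig)
      _ = _ := hvol _ (by linarith)
  have h3r : ENNReal.ofReal ((3 * r) ^ n) = (3 : ℝ≥0∞) ^ n * ENNReal.ofReal (r ^ n) := by
    rw [mul_pow, ENNReal.ofReal_mul (by positivity)]
    congr 1
    rw [ENNReal.ofReal_pow (by norm_num)]
    norm_num
  rw [h3r, mul_assoc] at hle
  have hne : ENNReal.ofReal (r ^ n) * volume T1 ≠ 0 := by
    apply mul_ne_zero _ hv0
    simp [ENNReal.ofReal_eq_zero]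
    positivity
  have hnt : ENNReal.ofReal (r ^ n) * volume T1 ≠ ⊤ :=
    ENNReal.mul_ne_top ENNReal.ofReal_ne_top hvt
  have := (ENNReal.mul_le_mul_iff_left hne hnt).1 hle
  have h3 : ((3 ^ n : ℕ) : ℝ≥0∞) = (3 : ℝ≥0∞) ^ n := by push_cast; ring
  rw [← h3] at this
  exact_mod_cast this

end Packing

section Zeta

lemma sum_icc_inv_sq (M : ℕ) (hM : 1 ≤ M) :
    ∑ j ∈ Finset.Icc 1 M, (1 / (j : ℝ) ^ 2) ≤ 2 - 1 / (M : ℝ) := by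
  induction M, hM using Nat.le_induction with
  | base => norm_num
  | succ M hM ih =>
    rw [Finset.sum_Icc_succ_top (by omega : 1 ≤ M + 1)]
    have hM0 : 0 < (M : ℝ) := by exact_mod_cast hM
    have hM1 : 0 < (M : ℝ) + 1 := by linarith
    have key : 1 / ((M : ℝ) + 1) ^ 2 ≤ 1 / M - 1 / (M + 1) := by
      rw [div_sub_div _ _ hM0.ne' hM1.ne']
      rw [div_le_div_iff₀ (by positivity) (by positivity)]
      ring_nf
      nlinarith
    push_cast
    linarith

lemma sum_inv_sq_le (J : Finset ℕ) (hJ : ∀ j ∈ J, 1 ≤ j) :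
    ∑ j ∈ J, (1 / (j : ℝ) ^ 2) ≤ 2 := by
  rcases J.eq_empty_or_nonempty with rfl | hne
  · simp
  have hmax := J.max'_mem hne
  set M := J.max' hne with hMdef
  have hJsub : J ⊆ Finset.Icc 1 M := by
    intro j hj
    exact Finset.mem_Icc.2 ⟨hJ j hj, Finset.le_max' J j hj⟩
  have h1M : 1 ≤ M := hJ M hmax
  have hMr : 0 < (M : ℝ) := by exact_mod_cast h1M
  calc ∑ j ∈ J, (1 / (j : ℝ) ^ 2) ≤ ∑ j ∈ Finset.Icc 1 M, (1 / (j : ℝ) ^ 2) :=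
        Finset.sum_le_sum_of_subset_of_nonneg hJsub (fun j _ _ => by positivity)
    _ ≤ 2 - 1 / (M : ℝ) := sum_icc_inv_sq M h1M
    _ ≤ 2 := by
        have : 0 < 1 / (M : ℝ) := by positivity
        linarith

end Zeta

section Russmann

lemma russmann {n K : ℕ} (hK : 1 ≤ K) (τ : ℝ) (hτ : 0 ≤ τ) (ω : Fin n → ℝ)
    (hdio : ∀ k : Fin n → ℤ, k ≠ 0 → (l1 k) ^ (-τ) ≤ |∑ i, (k i : ℝ) * ω i|)
    (A : Finset (Fin n → ℤ)) (hA : ∀ k ∈ A, 0 < l1 k ∧ l1 k ≤ K) :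
    ∑ k ∈ A, (|∑ i, (k i : ℝ) * ω i|⁻¹) ^ 2 ≤ 4 ^ (n + 1) * (K : ℝ) ^ (2 * τ) := by
  classical
  set g : (Fin n → ℤ) → ℝ := fun k => |∑ i, (k i : ℝ) * ω i| with hg
  have hKpos : (0 : ℝ) < K := by exact_mod_cast hK
  set Kτ : ℝ := (K : ℝ) ^ τ with hKτ
  have hKτpos : 0 < Kτ := Real.rpow_pos_of_pos hKpos τ
  have hk0 : ∀ k ∈ A, k ≠ 0 := fun k hk => l1_pos_iff.1 (hA k hk).1
  have hgpos : ∀ k ∈ A, 0 < g k := by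
    intro k hk
    exact lt_of_lt_of_le (Real.rpow_pos_of_pos (hA k hk).1 (-τ)) (hdio k (hk0 k hk))
  have hlb : ∀ k ∈ A, (1 : ℝ) ≤ g k * Kτ := by
    intro k hk
    have h1 : (l1 k) ^ τ ≤ Kτ := Real.rpow_le_rpow (l1_nonneg k) (hA k hk).2 hτ
    have h2 : (l1 k) ^ (-τ) ≤ g k := hdio k (hk0 k hk)
    have h3 : 0 < (l1 k) ^ τ := Real.rpow_pos_of_pos (hA k hk).1 τ
    calc (1 : ℝ) = (l1 k) ^ (-τ) * (l1 k) ^ τ := by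
          rw [← Real.rpow_add (hA k hk).1]; simp
      _ ≤ g k * Kτ := mul_le_mul h2 h1 h3.le (hgpos k hk).le
  set φ : (Fin n → ℤ) → Bool × ℕ :=
    fun k => ((if 0 ≤ ∑ i, (k i : ℝ) * ω i then true else false), ⌊g k * Kτ⌋₊) with hφ
  have hj1 : ∀ k ∈ A, 1 ≤ (φ k).2 := by
    intro k hk
    exact Nat.le_floor (by exact_mod_cast hlb k hk)
  have hfiber : ∀ y : Bool × ℕ, ∀ k ∈ A, ∀ k' ∈ A, φ k = φ k' → k ≠ k' →
      (K : ℝ) < l1 (k - k') := by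
    intro y k hk k' hk' heq hne
    by_contra hcon
    push_neg at hcon
    have hm0 : k - k' ≠ 0 := sub_ne_zero.2 hne
    have hfl : (⌊g k * Kτ⌋₊ : ℝ) = ⌊g k' * Kτ⌋₊ := by
      have := congrArg Prod.snd heq
      simp only [hφ] at this
      exact_mod_cast this
    have habs : |g k * Kτ - g k' * Kτ| < 1 := by
      have h1 : g k * Kτ < ⌊g k * Kτ⌋₊ + 1 := Nat.lt_floor_add_one _
      have h2 : g k' * Kτ < ⌊g k' * Kτ⌋₊ + 1 := Nat.lt_floor_add_one _
      have h3 : (⌊g k * Kτ⌋₊ : ℝ) ≤ g k * Kτ := Nat.floor_le (by positivity)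
      have h4 : (⌊g k' * Kτ⌋₊ : ℝ) ≤ g k' * Kτ := Nat.floor_le (by positivity)
      rw [abs_lt]
      constructor <;> nlinarith [hfl]
    have hsign : (0 ≤ ∑ i, (k i : ℝ) * ω i) ↔ (0 ≤ ∑ i, (k' i : ℝ) * ω i) := by
      have := congrArg Prod.fst heq
      simp only [hφ] at this
      by_cases h1 : 0 ≤ ∑ i, (k i : ℝ) * ω i <;> by_cases h2 : 0 ≤ ∑ i, (k' i : ℝ) * ω i <;>
        simp [h1, h2] at this ⊢
    have hdiff : |∑ i, ((k - k') i : ℝ) * ω i| = |g k - g k'| := by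
      have hsum : ∑ i, ((k - k') i : ℝ) * ω i
          = (∑ i, (k i : ℝ) * ω i) - ∑ i, (k' i : ℝ) * ω i := by
        rw [← Finset.sum_sub_distrib]
        refine Finset.sum_congr rfl fun i _ => ?_
        simp only [Pi.sub_apply, Int.cast_sub]
        ring
      rw [hsum]
      show |(∑ i, (k i : ℝ) * ω i) - ∑ i, (k' i : ℝ) * ω i|
        = abs (|∑ i, (k i : ℝ) * ω i| - |∑ i, (k' i : ℝ) * ω i|)
      by_cases h1 : 0 ≤ ∑ i, (k i : ℝ) * ω i
      · have h2 := hsign.1 h1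
        rw [abs_of_nonneg h1, abs_of_nonneg h2]
      · have h2 : ¬ 0 ≤ ∑ i, (k' i : ℝ) * ω i := fun h => h1 (hsign.2 h)
        push_neg at h1 h2
        rw [abs_of_neg h1, abs_of_neg h2]
        rw [show -(∑ i, (k i : ℝ) * ω i) - -(∑ i, (k' i : ℝ) * ω i)
          = -((∑ i, (k i : ℝ) * ω i) - ∑ i, (k' i : ℝ) * ω i) by ring, abs_neg]
    have hmub : |∑ i, ((k - k') i : ℝ) * ω i| < Kτ⁻¹ := by
      have hkey : |g k - g k'| * Kτ < 1 := by
        calc |g k - g k'| * Kτ = |(g k - g k') * Kτ| := by rw [abs_mul, abs_of_pos hKτpos]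
          _ = |g k * Kτ - g k' * Kτ| := by rw [sub_mul]
          _ < 1 := habs
      rw [hdiff, ← one_div]
      exact (lt_div_iff₀ hKτpos).2 hkey
    have hml : Kτ⁻¹ ≤ |∑ i, ((k - k') i : ℝ) * ω i| := by
      have h1 : (l1 (k - k')) ^ τ ≤ Kτ := Real.rpow_le_rpow (l1_nonneg _) hcon hτ
      have h2 : (l1 (k - k')) ^ (-τ) ≤ |∑ i, ((k - k') i : ℝ) * ω i| := hdio _ hm0
      have h3 : 0 < l1 (k - k') := l1_pos_iff.2 hm0
      calc Kτ⁻¹ ≤ ((l1 (k - k')) ^ τ)⁻¹ :=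
            inv_anti₀ (Real.rpow_pos_of_pos h3 τ) h1
        _ = (l1 (k - k')) ^ (-τ) := (Real.rpow_neg h3.le τ).symm
        _ ≤ _ := h2
    exact absurd hmub (not_lt.2 hml)
  have hKt2 : Kτ ^ 2 = (K : ℝ) ^ (2 * τ) := by
    rw [hKτ, ← Real.rpow_natCast ((K : ℝ) ^ τ) 2, ← Real.rpow_mul hKpos.le]
    norm_num
    rw [mul_comm]
  have hbound : ∀ y ∈ A.image φ, ∑ k ∈ A.filter (fun k => φ k = y), (g k)⁻¹ ^ 2
      ≤ (3 : ℝ) ^ n * ((K : ℝ) ^ (2 * τ) / ((y.2 : ℝ)) ^ 2) := by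
    intro y hy
    have hterm : ∀ k ∈ A.filter (fun k => φ k = y),
        (g k)⁻¹ ^ 2 ≤ (K : ℝ) ^ (2 * τ) / ((y.2 : ℝ)) ^ 2 := by
      intro k hk
      obtain ⟨hkA, hky⟩ := Finset.mem_filter.1 hk
      have hy1 : 1 ≤ y.2 := by rw [← hky]; exact hj1 k hkA
      have hy1' : (0 : ℝ) < (y.2 : ℝ) := by exact_mod_cast hy1
      have hj : (y.2 : ℝ) ≤ g k * Kτ := by
        rw [← hky]
        exact Nat.floor_le (by positivity)
      have hinv : (g k)⁻¹ ≤ Kτ / (y.2 : ℝ) := by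
        have hq : (y.2 : ℝ) / Kτ ≤ g k := (div_le_iff₀ hKτpos).2 hj
        have hqpos : 0 < (y.2 : ℝ) / Kτ := by positivity
        calc (g k)⁻¹ ≤ ((y.2 : ℝ) / Kτ)⁻¹ := inv_anti₀ hqpos hq
          _ = Kτ / (y.2 : ℝ) := by rw [inv_div]
      calc (g k)⁻¹ ^ 2 ≤ (Kτ / (y.2 : ℝ)) ^ 2 :=
            pow_le_pow_left₀ (inv_nonneg.2 (hgpos k hkA).le) hinv 2
        _ = (K : ℝ) ^ (2 * τ) / ((y.2 : ℝ)) ^ 2 := by rw [div_pow, hKt2]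
    have hcard : (A.filter (fun k => φ k = y)).card ≤ 3 ^ n := by
      refine packing K hK _ (fun k hk => (hA k (Finset.mem_filter.1 hk).1).2) ?_
      intro k hk k' hk' hne
      exact hfiber y k (Finset.mem_filter.1 hk).1 k' (Finset.mem_filter.1 hk').1
        ((Finset.mem_filter.1 hk).2.trans (Finset.mem_filter.1 hk').2.symm) hne
    calc ∑ k ∈ A.filter (fun k => φ k = y), (g k)⁻¹ ^ 2
        ≤ (A.filter (fun k => φ k = y)).card • ((K : ℝ) ^ (2 * τ) / ((y.2 : ℝ)) ^ 2) :=
          Finset.sum_le_card_nsmul _ _ _ hterm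
      _ = ((A.filter (fun k => φ k = y)).card : ℝ) * ((K : ℝ) ^ (2 * τ) / ((y.2 : ℝ)) ^ 2) :=
          nsmul_eq_mul _ _
      _ ≤ (3 : ℝ) ^ n * ((K : ℝ) ^ (2 * τ) / ((y.2 : ℝ)) ^ 2) := by
          refine mul_le_mul_of_nonneg_right ?_ (by positivity)
          exact_mod_cast hcard
  set J : Finset ℕ := (A.image φ).image Prod.snd with hJ
  have hJ1 : ∀ j ∈ J, 1 ≤ j := by
    intro j hj
    obtain ⟨y, hy, rfl⟩ := Finset.mem_image.1 hj
    obtain ⟨k, hk, rfl⟩ := Finset.mem_image.1 hy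
    exact hj1 k hk
  calc ∑ k ∈ A, (g k)⁻¹ ^ 2
      = ∑ y ∈ A.image φ, ∑ k ∈ A.filter (fun k => φ k = y), (g k)⁻¹ ^ 2 :=
        (Finset.sum_fiberwise_of_maps_to (fun k hk => Finset.mem_image_of_mem φ hk) _).symm
    _ ≤ ∑ y ∈ A.image φ, (3 : ℝ) ^ n * ((K : ℝ) ^ (2 * τ) / ((y.2 : ℝ)) ^ 2) :=
        Finset.sum_le_sum hbound
    _ ≤ ∑ y ∈ (Finset.univ : Finset Bool) ×ˢ J,
          (3 : ℝ) ^ n * ((K : ℝ) ^ (2 * τ) / ((y.2 : ℝ)) ^ 2) := by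
        refine Finset.sum_le_sum_of_subset_of_nonneg ?_ (fun y _ _ => by positivity)
        intro y hy
        exact Finset.mem_product.2 ⟨Finset.mem_univ _, Finset.mem_image_of_mem _ hy⟩
    _ = ∑ _b ∈ (Finset.univ : Finset Bool), ∑ j ∈ J,
          (3 : ℝ) ^ n * ((K : ℝ) ^ (2 * τ) / ((j : ℝ)) ^ 2) := by
        rw [Finset.sum_product]
    _ = 2 * ∑ j ∈ J, (3 : ℝ) ^ n * ((K : ℝ) ^ (2 * τ) / ((j : ℝ)) ^ 2) := by
        rw [Finset.sum_const, Finset.card_univ, Fintype.card_bool]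
        rw [two_smul]; ring
    _ = 2 * ((3 : ℝ) ^ n * (K : ℝ) ^ (2 * τ) * ∑ j ∈ J, (1 / (j : ℝ) ^ 2)) := by
        have heq : ∑ j ∈ J, (3 : ℝ) ^ n * ((K : ℝ) ^ (2 * τ) / ((j : ℝ)) ^ 2)
            = (3 : ℝ) ^ n * (K : ℝ) ^ (2 * τ) * ∑ j ∈ J, (1 / (j : ℝ) ^ 2) := by
          rw [Finset.mul_sum]
          exact Finset.sum_congr rfl fun j _ => by ring
        rw [heq]
    _ ≤ 2 * ((3 : ℝ) ^ n * (K : ℝ) ^ (2 * τ) * 2) := by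
        have h0 : (0 : ℝ) ≤ (3 : ℝ) ^ n * (K : ℝ) ^ (2 * τ) := by positivity
        have := sum_inv_sq_le J hJ1
        nlinarith
    _ ≤ 4 ^ (n + 1) * (K : ℝ) ^ (2 * τ) := by
        have h34 : (3 : ℝ) ^ n ≤ 4 ^ n := pow_le_pow_left₀ (by norm_num) (by norm_num) n
        have hKr : (0 : ℝ) ≤ (K : ℝ) ^ (2 * τ) := (Real.rpow_pos_of_pos hKpos _).le
        have h4 : (4 : ℝ) ^ (n + 1) = 4 * 4 ^ n := by ring
        rw [h4]
        nlinarith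

end Russmann

theorem diophantine_small_divisor (n K : ℕ) (hn : 1 ≤ n) (hK : 1 ≤ K) (s τ : ℝ) (hs : 0 ≤ s)
    (hτ : (n : ℝ) - 1 ≤ τ) (ω : Fin n → ℝ)
    (hdio : ∀ k : Fin n → ℤ, k ≠ 0 → (l1 k) ^ (-τ) ≤ |∑ i, (k i : ℝ) * ω i|) :
    (∀ k : Fin n → ℤ, 0 < l1 k → l1 k ≤ K → |∑ i, (k i : ℝ) * ω i|⁻¹ ≤ (K : ℝ) ^ τ) ∧
    ∀ c : (Fin n → ℤ) → ℂ, (∀ k, c k ≠ 0 → 0 < l1 k ∧ l1 k ≤ K) →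
      (K : ℝ) * wiener (fun k => if 0 < l1 k ∧ l1 k ≤ K then
          c k / (Complex.I * ((∑ i, (k i : ℝ) * ω i : ℝ) : ℂ)) else 0) s
        ≤ (2 : ℝ) ^ (n + 1) * Real.exp (s * K) * (K : ℝ) ^ (τ + 1) * stripL2 c s := by
  classical
  have hτ0 : 0 ≤ τ := by
    have : (1 : ℝ) ≤ (n : ℝ) := by exact_mod_cast hn
    linarith
  have hKpos : (0 : ℝ) < K := by exact_mod_cast hK
  -- part 1
  have part1 : ∀ k : Fin n → ℤ, 0 < l1 k → l1 k ≤ K →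
      |∑ i, (k i : ℝ) * ω i|⁻¹ ≤ (K : ℝ) ^ τ := by
    intro k h1 h2
    have hk0 : k ≠ 0 := l1_pos_iff.1 h1
    have hd := hdio k hk0
    calc |∑ i, (k i : ℝ) * ω i|⁻¹ ≤ ((l1 k) ^ (-τ))⁻¹ :=
          inv_anti₀ (Real.rpow_pos_of_pos h1 _) hd
      _ = (l1 k) ^ τ := by rw [Real.rpow_neg h1.le, inv_inv]
      _ ≤ (K : ℝ) ^ τ := Real.rpow_le_rpow (l1_nonneg k) h2 hτ0
  refine ⟨part1, ?_⟩
  intro c hc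
  -- finite supports
  set B : Finset (Fin n → ℤ) := Fintype.piFinset fun _ : Fin n => Finset.Icc (-(K : ℤ)) K with hB
  have hBmem : ∀ k : Fin n → ℤ, l1 k ≤ K → k ∈ B := by
    intro k hk
    rw [hB, Fintype.mem_piFinset]
    intro i
    rw [Finset.mem_Icc]
    have h1 : |(k i : ℝ)| ≤ (K : ℝ) := by
      refine le_trans ?_ hk
      exact Finset.single_le_sum (f := fun j => |(k j : ℝ)|)
        (fun j _ => abs_nonneg _) (Finset.mem_univ i)
    have h2 : |k i| ≤ (K : ℤ) := by
      rw [← Int.cast_abs] at h1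
      exact_mod_cast h1
    exact abs_le.1 h2
  set A : Finset (Fin n → ℤ) := B.filter (fun k => 0 < l1 k ∧ l1 k ≤ K) with hA
  have hAprop : ∀ k ∈ A, 0 < l1 k ∧ l1 k ≤ K := fun k hk => (Finset.mem_filter.1 hk).2
  set g : (Fin n → ℤ) → ℝ := fun k => |∑ i, (k i : ℝ) * ω i| with hg
  have hgpos : ∀ k ∈ A, 0 < g k := by
    intro k hk
    exact lt_of_lt_of_le (Real.rpow_pos_of_pos (hAprop k hk).1 (-τ))
      (hdio k (l1_pos_iff.1 (hAprop k hk).1))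
  set F : (Fin n → ℤ) → ℂ := fun k => if 0 < l1 k ∧ l1 k ≤ K then
    c k / (Complex.I * ((∑ i, (k i : ℝ) * ω i : ℝ) : ℂ)) else 0 with hF
  -- wiener norm as a finite sum
  have hwiener : wiener F s = ∑ k ∈ A, ‖F k‖ * Real.exp (s * l1 k) := by
    unfold wiener
    refine tsum_eq_sum ?_
    intro k hk
    have : ¬ (0 < l1 k ∧ l1 k ≤ K) := by
      intro hcond
      exact hk (Finset.mem_filter.2 ⟨hBmem k hcond.2, hcond⟩)
    rw [hF]
    simp [this]
  -- strip L2 norm as a finite sum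
  set X : ℝ := ∑ k ∈ B, ‖c k‖ ^ 2 * wt (2 * s) k with hX
  have hstrip : stripL2 c s = Real.sqrt X := by
    unfold stripL2
    congr 1
    refine tsum_eq_sum ?_
    intro k hk
    have : c k = 0 := by
      by_contra hne
      exact hk (hBmem k (hc k hne).2)
    simp [this]
  have hwt_nonneg : ∀ k : Fin n → ℤ, 0 ≤ wt (2 * s) k :=
    fun k => le_trans zero_le_one (one_le_wt _ _)
  have hX0 : 0 ≤ X := Finset.sum_nonneg fun k _ => mul_nonneg (by positivity) (hwt_nonneg k)
  -- norm of the coefficients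
  have hFnorm : ∀ k ∈ A, ‖F k‖ = ‖c k‖ / g k := by
    intro k hk
    rw [hF]
    simp only [if_pos (hAprop k hk)]
    rw [norm_div, norm_mul, Complex.norm_I, one_mul, Complex.norm_real, Real.norm_eq_abs]
  -- Cauchy-Schwarz
  set u : (Fin n → ℤ) → ℝ := fun k => ‖c k‖ * Real.sqrt (wt (2 * s) k) with hu
  set v : (Fin n → ℤ) → ℝ := fun k => Real.exp (s * l1 k) / (g k * Real.sqrt (wt (2 * s) k))
    with hv
  have hsqrt_pos : ∀ k : Fin n → ℤ, 0 < Real.sqrt (wt (2 * s) k) := by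
    intro k
    exact Real.sqrt_pos.2 (lt_of_lt_of_le zero_lt_one (one_le_wt _ _))
  have huv : ∀ k ∈ A, u k * v k = ‖c k‖ / g k * Real.exp (s * l1 k) := by
    intro k hk
    rw [hu, hv]
    field_simp [(hsqrt_pos k).ne', (hgpos k hk).ne']
  have hCS : (∑ k ∈ A, u k * v k) ^ 2 ≤ (∑ k ∈ A, u k ^ 2) * ∑ k ∈ A, v k ^ 2 :=
    Finset.sum_mul_sq_le_sq_mul_sq A u v
  have hu2 : ∑ k ∈ A, u k ^ 2 ≤ X := by
    rw [hX]
    refine le_trans (le_of_eq (Finset.sum_congr rfl fun k hk => ?_))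
      (Finset.sum_le_sum_of_subset_of_nonneg (Finset.filter_subset _ _)
        (fun k _ _ => mul_nonneg (by positivity) (hwt_nonneg k)))
    rw [hu, mul_pow, Real.sq_sqrt (hwt_nonneg k)]
  have hv2 : ∑ k ∈ A, v k ^ 2 ≤ Real.exp (s * K) ^ 2 * (4 ^ (n + 1) * (K : ℝ) ^ (2 * τ)) := by
    have hvk : ∀ k ∈ A, v k ^ 2 ≤ Real.exp (s * K) ^ 2 * ((g k)⁻¹) ^ 2 := by
      intro k hk
      have h1 : v k ≤ Real.exp (s * K) * (g k)⁻¹ := by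
        rw [hv]
        have hw1 : 1 ≤ Real.sqrt (wt (2 * s) k) :=
          Real.one_le_sqrt.2 (one_le_wt _ _) 
        have hge : g k ≤ g k * Real.sqrt (wt (2 * s) k) := by
          nlinarith [hgpos k hk]
        have hexp : Real.exp (s * l1 k) ≤ Real.exp (s * K) :=
          Real.exp_le_exp.2 (mul_le_mul_of_nonneg_left (hAprop k hk).2 hs)
        calc Real.exp (s * l1 k) / (g k * Real.sqrt (wt (2 * s) k))
            ≤ Real.exp (s * K) / g k :=
              div_le_div₀ (Real.exp_pos _).le hexp (hgpos k hk) hge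
          _ = Real.exp (s * K) * (g k)⁻¹ := by rw [div_eq_mul_inv]
      have h2 : 0 ≤ v k := by
        rw [hv]
        positivity
      calc v k ^ 2 ≤ (Real.exp (s * K) * (g k)⁻¹) ^ 2 := pow_le_pow_left₀ h2 h1 2
        _ = Real.exp (s * K) ^ 2 * ((g k)⁻¹) ^ 2 := by ring
    calc ∑ k ∈ A, v k ^ 2 ≤ ∑ k ∈ A, Real.exp (s * K) ^ 2 * ((g k)⁻¹) ^ 2 :=
          Finset.sum_le_sum hvk
      _ = Real.exp (s * K) ^ 2 * ∑ k ∈ A, ((g k)⁻¹) ^ 2 := by rw [Finset.mul_sum]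
      _ ≤ Real.exp (s * K) ^ 2 * (4 ^ (n + 1) * (K : ℝ) ^ (2 * τ)) := by
          refine mul_le_mul_of_nonneg_left ?_ (by positivity)
          exact russmann hK τ hτ0 ω hdio A hAprop
  -- assemble
  have hSeq : ∑ k ∈ A, ‖F k‖ * Real.exp (s * l1 k) = ∑ k ∈ A, u k * v k := by
    refine Finset.sum_congr rfl fun k hk => ?_
    rw [hFnorm k hk, huv k hk]
  have hS0 : 0 ≤ ∑ k ∈ A, u k * v k := by
    refine Finset.sum_nonneg fun k hk => mul_nonneg ?_ ?_
    · rw [hu]; positivity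
    · rw [hv]
      refine div_nonneg (Real.exp_pos _).le (mul_nonneg ?_ (Real.sqrt_nonneg _))
      exact abs_nonneg _
  set R : ℝ := Real.exp (s * K) ^ 2 * (4 ^ (n + 1) * (K : ℝ) ^ (2 * τ)) with hR
  have hsq : (∑ k ∈ A, u k * v k) ^ 2 ≤ X * R := by
    refine le_trans hCS (mul_le_mul hu2 hv2 ?_ hX0)
    exact Finset.sum_nonneg fun k _ => sq_nonneg _
  have hsum_le : ∑ k ∈ A, u k * v k ≤ Real.sqrt (X * R) := by
    have h := Real.sqrt_le_sqrt hsq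
    rwa [Real.sqrt_sq hS0] at h
  have hKt2 : ((K : ℝ) ^ τ) ^ 2 = (K : ℝ) ^ (2 * τ) := by
    rw [← Real.rpow_natCast ((K : ℝ) ^ τ) 2, ← Real.rpow_mul hKpos.le]
    norm_num
    rw [mul_comm]
  have hsqrtR : Real.sqrt R = Real.exp (s * K) * (2 ^ (n + 1) * (K : ℝ) ^ τ) := by
    have h42 : ((2 : ℝ) ^ (n + 1)) ^ 2 = 4 ^ (n + 1) := by
      rw [← pow_mul, show (4 : ℝ) = 2 ^ 2 by norm_num, ← pow_mul]
      ring_nf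
    have hReq : R = (Real.exp (s * K) * (2 ^ (n + 1) * (K : ℝ) ^ τ)) ^ 2 := by
      have : (Real.exp (s * K) * (2 ^ (n + 1) * (K : ℝ) ^ τ)) ^ 2
          = Real.exp (s * K) ^ 2 * (((2 : ℝ) ^ (n + 1)) ^ 2 * ((K : ℝ) ^ τ) ^ 2) := by ring
      rw [hR, this, h42, hKt2]
    rw [hReq, Real.sqrt_sq (by positivity)]
  have hfinal : (K : ℝ) * wiener F s
      ≤ (2 : ℝ) ^ (n + 1) * Real.exp (s * K) * (K : ℝ) ^ (τ + 1) * Real.sqrt X := by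
    rw [hwiener, hSeq]
    calc (K : ℝ) * ∑ k ∈ A, u k * v k
        ≤ (K : ℝ) * (Real.sqrt X * (Real.exp (s * K) * (2 ^ (n + 1) * (K : ℝ) ^ τ))) := by
          refine mul_le_mul_of_nonneg_left ?_ hKpos.le
          calc ∑ k ∈ A, u k * v k ≤ Real.sqrt (X * R) := hsum_le
            _ = Real.sqrt X * Real.sqrt R := Real.sqrt_mul hX0 _
            _ = Real.sqrt X * (Real.exp (s * K) * (2 ^ (n + 1) * (K : ℝ) ^ τ)) := by
                rw [hsqrtR]
      _ = (2 : ℝ) ^ (n + 1) * Real.exp (s * K) * (K : ℝ) ^ (τ + 1) * Real.sqrt X := by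
          rw [Real.rpow_add_one hKpos.ne' τ]
          ring
  rw [hstrip]
  exact hfinal
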